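/- Let I = (x_1^2+x_1,...,x_n^2+x_n, f) be a boolean ideal and g a polynomial. Then g ∈ I if and only if V(f) ⊆ V(g), where V denotes zero sets in Z_2^n. -/

import Mathlib

open MvPolynomial

namespace Stmt13Aux

variable {n : ℕ}

noncomputable abbrev J (n : ℕ) : Ideal (MvPolynomial (Fin n) (ZMod 2)) :=
  Ideal.span (Set.range fun i : Fin n => (X i : MvPolynomial (Fin n) (ZMod 2)) ^ 2 + X i)

lemma Xpow_sub_X_mem (i : Fin n) : ∀ k, 1 ≤ k →
    (X i : MvPolynomial (Fin n) (ZMod 2)) ^ k - X i ∈ J n := by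
  intro k hk
  induction k with
  | zero => omega
  | succ m ih =>
    rcases Nat.eq_or_lt_of_le hk with h | h
    · simp [← h]
    · have hm : 1 ≤ m := by omega
      have h1 : (X i : MvPolynomial (Fin n) (ZMod 2)) ^ (m + 1) - X i
          = X i * (X i ^ m - X i) + (X i ^ 2 + X i) := by ring_nf; rw [CharTwo.neg_eq]
      rw [h1]
      exact add_mem (Ideal.mul_mem_left _ _ (ih hm))
        (Ideal.subset_span ⟨i, rfl⟩)

lemma prod_sub_prod_mem {ι : Type*} (s : Finset ι)
    (a b : ι → MvPolynomial (Fin n) (ZMod 2))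
    (h : ∀ i ∈ s, a i - b i ∈ J n) :
    (∏ i ∈ s, a i) - ∏ i ∈ s, b i ∈ J n := by
  classical
  induction s using Finset.induction with
  | empty => simp
  | @insert x s hx ih =>
    rw [Finset.prod_insert hx, Finset.prod_insert hx]
    have key : a x * ∏ i ∈ s, a i - b x * ∏ i ∈ s, b i
        = a x * ((∏ i ∈ s, a i) - ∏ i ∈ s, b i) + (a x - b x) * ∏ i ∈ s, b i := by ring
    rw [key]
    exact add_mem (Ideal.mul_mem_left _ _ (ih fun i hi => h i (Finset.mem_insert_of_mem hi)))
      (Ideal.mul_mem_right _ _ (h x (Finset.mem_insert_self x s)))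

lemma reduce (h : MvPolynomial (Fin n) (ZMod 2)) :
    ∃ h' ∈ restrictDegree (Fin n) (ZMod 2) 1, h - h' ∈ J n := by
  classical
  induction h using MvPolynomial.induction_on' with
  | monomial d c =>
    refine ⟨monomial (d.mapRange (fun k => min k 1) (by simp)) c, ?_, ?_⟩
    · rw [mem_restrictDegree]
      intro s hs i
      have := MvPolynomial.support_monomial_subset hs
      simp only [Finset.mem_singleton] at this
      subst this
      simp [Finsupp.mapRange_apply]
    · rw [monomial_eq, monomial_eq]
      have hsupp : (d.mapRange (fun k => min k 1) (by simp)).support = d.support := by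
        ext i; simp only [Finsupp.mem_support_iff, Finsupp.mapRange_apply]; omega
      rw [Finsupp.prod, Finsupp.prod, hsupp]
      have key : (C c : MvPolynomial (Fin n) (ZMod 2)) * (∏ i ∈ d.support, X i ^ d i)
            - C c * ∏ i ∈ d.support, X i ^ (d.mapRange (fun k => min k 1) (by simp)) i
          = C c * ((∏ i ∈ d.support, X i ^ d i)
            - ∏ i ∈ d.support, X i ^ (d.mapRange (fun k => min k 1) (by simp)) i) := by ring
      rw [key]
      refine Ideal.mul_mem_left _ _ (prod_sub_prod_mem _ _ _ ?_)
      intro i hi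
      have hdi : 1 ≤ d i := by
        rw [Finsupp.mem_support_iff] at hi; omega
      have : (d.mapRange (fun k => min k 1) (by simp)) i = 1 := by
        simp [Finsupp.mapRange_apply]; omega
      rw [this, pow_one]
      exact Xpow_sub_X_mem i (d i) hdi
  | add p q hp hq =>
    obtain ⟨p', hp1, hp2⟩ := hp
    obtain ⟨q', hq1, hq2⟩ := hq
    refine ⟨p' + q', add_mem hp1 hq1, ?_⟩
    have : p + q - (p' + q') = (p - p') + (q - q') := by ring
    rw [this]
    exact add_mem hp2 hq2

lemma J_le_ker (p : Fin n → ZMod 2) : J n ≤ RingHom.ker (eval p) := by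
  rw [Ideal.span_le]
  rintro _ ⟨i, rfl⟩
  simp only [SetLike.mem_coe, RingHom.mem_ker, map_add, map_pow, eval_X]
  have h2 : ∀ a : ZMod 2, a ^ 2 = a := by decide
  rw [h2]; exact CharTwo.add_self_eq_zero _

lemma vanish_mem_J (h : MvPolynomial (Fin n) (ZMod 2))
    (hv : ∀ p : Fin n → ZMod 2, eval p h = 0) : h ∈ J n := by
  obtain ⟨h', hh'1, hh'2⟩ := reduce h
  have hz : h' = 0 := by
    refine MvPolynomial.eq_zero_of_eval_eq_zero (Fin n) (ZMod 2) h' ?_ ?_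
    · intro v
      have h1 : eval v (h - h') = 0 := J_le_ker v hh'2
      have h2 := hv v
      rw [map_sub, h2, zero_sub, neg_eq_zero] at h1
      exact h1
    · simpa using hh'1
  rw [hz, sub_zero] at hh'2
  exact hh'2

end Stmt13Aux

theorem stmt_13 (n : ℕ) (f g : MvPolynomial (Fin n) (ZMod 2)) :
    g ∈ Ideal.span ((Set.range fun i : Fin n => (X i : MvPolynomial (Fin n) (ZMod 2)) ^ 2 + X i) ∪ {f}) ↔
      {p : Fin n → ZMod 2 | eval p f = 0} ⊆ {p : Fin n → ZMod 2 | eval p g = 0} := by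
  constructor
  · intro hg p hp
    simp only [Set.mem_setOf_eq] at hp ⊢
    have hle : Ideal.span ((Set.range fun i : Fin n =>
        (X i : MvPolynomial (Fin n) (ZMod 2)) ^ 2 + X i) ∪ {f}) ≤ RingHom.ker (eval p) := by
      rw [Ideal.span_le]
      rintro x (⟨i, rfl⟩ | hx)
      · exact Stmt13Aux.J_le_ker p (Ideal.subset_span ⟨i, rfl⟩)
      · simp only [Set.mem_singleton_iff] at hx
        subst hx
        exact hp
    exact hle hg
  · intro hV
    have h1 : g - g * f ∈ Ideal.span ((Set.range fun i : Fin n =>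
        (X i : MvPolynomial (Fin n) (ZMod 2)) ^ 2 + X i) ∪ {f}) := by
      refine Ideal.span_mono Set.subset_union_left (Stmt13Aux.vanish_mem_J _ ?_)
      intro p
      rw [map_sub, map_mul]
      by_cases hfp : eval p f = 0
      · have := hV hfp
        simp only [Set.mem_setOf_eq] at this
        rw [this, hfp]; ring
      · have h01 : ∀ a : ZMod 2, a ≠ 0 → a = 1 := by decide
        have : eval p f = 1 := h01 _ hfp
        rw [this]; ring
    have h2 : g * f ∈ Ideal.span ((Set.range fun i : Fin n =>
        (X i : MvPolynomial (Fin n) (ZMod 2)) ^ 2 + X i) ∪ {f}) :=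
      Ideal.mul_mem_left _ _ (Ideal.subset_span (Or.inr rfl))
    have := add_mem h1 h2
    simpa using this
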